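/- Let y : ℝ → ℝ be continuous and let g : ℝ → (0, ∞) be differentiable with g'(t) = −2·y(t)·g(t) for all t ∈ ℝ. Suppose there are δ > 0 and T > 0 such that y(t) ≤ −δ for all t ≥ T and y(t) ≥ δ for all t ≤ −T. Then g(t) → ∞ as t → ∞ and as t → −∞, and there is a constant a > 0 with g(t) ≥ a for all t ∈ ℝ. -/

import Mathlib

/-- If `g > 0` satisfies `g' = −2·y·g` with `y` continuous, and
`y ≤ −δ` for `t ≥ T` while `y ≥ δ` for `t ≤ −T` (some `δ, T > 0`), then
`g → ∞` at both ends and `g` is bounded below by a positive constant. -/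
theorem stmt_17 (y : ℝ → ℝ) (hy : Continuous y)
    (g : ℝ → ℝ) (hgpos : ∀ t : ℝ, 0 < g t)
    (hg : ∀ t : ℝ, HasDerivAt g (-2 * y t * g t) t)
    (δ T : ℝ) (hδ : 0 < δ) (hT : 0 < T)
    (h₁ : ∀ t : ℝ, T ≤ t → y t ≤ -δ)
    (h₂ : ∀ t : ℝ, t ≤ -T → δ ≤ y t) :
    Filter.Tendsto g Filter.atTop Filter.atTop ∧
    Filter.Tendsto g Filter.atBot Filter.atTop ∧
    ∃ a : ℝ, 0 < a ∧ ∀ t : ℝ, a ≤ g t := by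
  set L : ℝ → ℝ := fun t => Real.log (g t) with hLdef
  have hL : ∀ t : ℝ, HasDerivAt L (-2 * y t) t := by
    intro t
    have h := (hg t).log (hgpos t).ne'
    rwa [mul_div_assoc, div_self (hgpos t).ne', mul_one] at h
  have hgL : ∀ t : ℝ, g t = Real.exp (L t) := fun t =>
    (Real.exp_log (hgpos t)).symm
  have gcont : Continuous g :=
    continuous_iff_continuousAt.mpr fun t => (hg t).continuousAt
  -- F₁ monotone on Ici T
  have hF₁ : ∀ t : ℝ, HasDerivAt (fun s => L s - 2 * δ * s) (-2 * y t - 2 * δ) t := by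
    intro t
    exact ((hL t).sub ((hasDerivAt_id t).const_mul (2 * δ))).congr_deriv (by ring)
  have hF₁mono : MonotoneOn (fun s => L s - 2 * δ * s) (Set.Ici T) := by
    apply monotoneOn_of_deriv_nonneg (convex_Ici T)
      (fun t _ => ((hF₁ t).continuousAt).continuousWithinAt)
      (fun t _ => ((hF₁ t).differentiableAt).differentiableWithinAt)
    intro t ht
    rw [interior_Ici] at ht
    rw [(hF₁ t).deriv]
    have := h₁ t (le_of_lt ht)
    nlinarith
  have key1 : ∀ t : ℝ, T ≤ t → L T + 2 * δ * (t - T) ≤ L t := by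
    intro t ht
    have := hF₁mono (Set.self_mem_Ici) (Set.mem_Ici.mpr ht) ht
    simp only at this
    linarith
  -- F₂ antitone on Iic (-T)
  have hF₂ : ∀ t : ℝ, HasDerivAt (fun s => L s + 2 * δ * s) (-2 * y t + 2 * δ) t := by
    intro t
    exact ((hL t).add ((hasDerivAt_id t).const_mul (2 * δ))).congr_deriv (by ring)
  have hF₂anti : AntitoneOn (fun s => L s + 2 * δ * s) (Set.Iic (-T)) := by
    apply antitoneOn_of_deriv_nonpos (convex_Iic (-T))
      (fun t _ => ((hF₂ t).continuousAt).continuousWithinAt)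
      (fun t _ => ((hF₂ t).differentiableAt).differentiableWithinAt)
    intro t ht
    rw [interior_Iic] at ht
    rw [(hF₂ t).deriv]
    have := h₂ t (le_of_lt ht)
    nlinarith
  have key2 : ∀ t : ℝ, t ≤ -T → L (-T) + 2 * δ * (-T - t) ≤ L t := by
    intro t ht
    have := hF₂anti (Set.mem_Iic.mpr ht) (Set.self_mem_Iic) ht
    simp only at this
    linarith
  have hLtop : Filter.Tendsto L Filter.atTop Filter.atTop := by
    apply Filter.tendsto_atTop_mono' _ (_ : ∀ᶠ t in Filter.atTop,
      L T + 2 * δ * (t - T) ≤ L t)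
    · have : Filter.Tendsto (fun t : ℝ => L T + 2 * δ * (t - T)) Filter.atTop
          Filter.atTop := by
        apply Filter.tendsto_atTop_add_const_left
        apply Filter.Tendsto.const_mul_atTop (by positivity)
        exact Filter.tendsto_atTop_add_const_right _ _ Filter.tendsto_id
      exact this
    · filter_upwards [Filter.eventually_ge_atTop T] with t ht using key1 t ht
  have hLbot : Filter.Tendsto L Filter.atBot Filter.atTop := by
    apply Filter.tendsto_atTop_mono' _ (_ : ∀ᶠ t in Filter.atBot,
      L (-T) + 2 * δ * (-T - t) ≤ L t)
    · have : Filter.Tendsto (fun t : ℝ => L (-T) + 2 * δ * (-T - t)) Filter.atBot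
          Filter.atTop := by
        apply Filter.tendsto_atTop_add_const_left
        apply Filter.Tendsto.const_mul_atTop (by positivity)
        have := Filter.tendsto_atTop_add_const_left Filter.atBot (-T)
          Filter.tendsto_neg_atBot_atTop
        exact this.congr fun t => by ring
      exact this
    · filter_upwards [Filter.eventually_le_atBot (-T)] with t ht using key2 t ht
  have hgtop : Filter.Tendsto g Filter.atTop Filter.atTop := by
    have := Real.tendsto_exp_atTop.comp hLtop
    exact this.congr fun t => (hgL t).symm
  have hgbot : Filter.Tendsto g Filter.atBot Filter.atTop := by
    have := Real.tendsto_exp_atTop.comp hLbot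
    exact this.congr fun t => (hgL t).symm
  refine ⟨hgtop, hgbot, ?_⟩
  obtain ⟨t₀, ht₀mem, ht₀min⟩ := isCompact_Icc.exists_isMinOn
    (Set.nonempty_Icc.mpr (by linarith)) (gcont.continuousOn (s := Set.Icc (-T) T))
  refine ⟨g t₀, hgpos t₀, fun t => ?_⟩
  have hTmem : T ∈ Set.Icc (-T) T := Set.mem_Icc.mpr ⟨by linarith, le_refl T⟩
  have hnTmem : -T ∈ Set.Icc (-T) T := Set.mem_Icc.mpr ⟨le_refl _, by linarith⟩
  rcases le_total t T with htT | htT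
  · rcases le_total (-T) t with hnt | hnt
    · exact ht₀min (Set.mem_Icc.mpr ⟨hnt, htT⟩)
    · -- t ≤ -T : L t ≥ L (-T)
      have h := key2 t hnt
      have hle : L (-T) ≤ L t := by nlinarith
      calc g t₀ ≤ g (-T) := ht₀min hnTmem
        _ ≤ g t := by
            rw [hgL t, hgL (-T)]; exact Real.exp_le_exp.mpr hle
  · -- T ≤ t
    have h := key1 t htT
    have hle : L T ≤ L t := by nlinarith
    calc g t₀ ≤ g T := ht₀min hTmem
      _ ≤ g t := by
          rw [hgL t, hgL T]; exact Real.exp_le_exp.mpr hle
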